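/- Let A be a DFA over alphabet {a,b} with at most k states (k ≥ 1) that accepts ε and a^k and rejects a^i for all 0 < i < k. Then A has exactly k states, δ(s_0, a^k) = s_0, and for each i with 0 ≤ i < k, δ(δ(s_0, a^i), a) = δ(s_0, a^{(i+1) mod k}). -/
import Mathlib


/-- Letter `a` is `false`, letter `b` is `true`. A DFA with at most `k` states accepting
`ε` and `a^k` and rejecting every `a^i` with `0 < i < k` has exactly `k` states,
satisfies `δ(s₀, a^k) = s₀`, and its states `sᵢ = δ(s₀, aⁱ)` form an `a`-cycle. -/
theorem dfa_a_cycle_structure {σ : Type} [Fintype σ] (k : ℕ) (hk : 1 ≤ k)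
    (A : DFA Bool σ) (hcard : Fintype.card σ ≤ k)
    (hε : [] ∈ A.accepts)
    (hak : List.replicate k false ∈ A.accepts)
    (hrej : ∀ i, 0 < i → i < k → List.replicate i false ∉ A.accepts) :
    Fintype.card σ = k ∧
    A.eval (List.replicate k false) = A.start ∧
    ∀ i, i < k →
      A.step (A.eval (List.replicate i false)) false =
        A.eval (List.replicate ((i + 1) % k) false) := by
  set f : ℕ → σ := fun i => A.eval (List.replicate i false) with hf
  have fstep : ∀ i, f (i + 1) = A.step (f i) false := by
    intro i
    simp only [hf, List.replicate_succ' (n := i), DFA.eval,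
      DFA.evalFrom_append_singleton]
  have shift : ∀ i j, f i = f j → ∀ m, f (i + m) = f (j + m) := by
    intro i j h m
    induction m with
    | zero => simpa using h
    | succ m ih =>
      rw [← Nat.add_assoc, ← Nat.add_assoc, fstep, fstep, ih]
  have key : ∀ i j, i < j → j ≤ k → f i = f j → i = 0 ∧ j = k := by
    intro i j hij hjk h
    have h1 : f (i + (k - j)) = f (j + (k - j)) := shift i j h (k - j)
    have h2 : j + (k - j) = k := by omega
    rw [h2] at h1
    -- f (i + (k - j)) is accepting
    have hacc : f (i + (k - j)) ∈ A.accept := by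
      rw [h1]; exact hak
    by_contra hcon
    have hpos : 0 < i + (k - j) := by omega
    have hlt : i + (k - j) < k := by omega
    exact hrej _ hpos hlt hacc
  have finj : Function.Injective (fun x : Fin k => f x.val) := by
    intro x y hxy
    rcases lt_trichotomy x.val y.val with h | h | h
    · exact absurd ((key _ _ h (le_of_lt y.isLt) hxy).2) (by omega)
    · exact Fin.ext h
    · exact absurd ((key _ _ h (le_of_lt x.isLt) hxy.symm).2) (by omega)
  have hcard' : Fintype.card σ = k :=
    le_antisymm hcard (by simpa using Fintype.card_le_of_injective _ finj)
  have hcycle : f k = f 0 := by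
    have hnot : ¬ Function.Injective (fun x : Fin (k + 1) => f x.val) := by
      intro hinj
      have := Fintype.card_le_of_injective _ hinj
      simp [hcard'] at this
    rw [Function.not_injective_iff] at hnot
    obtain ⟨x, y, hxy, hne⟩ := hnot
    rcases lt_trichotomy x.val y.val with h | h | h
    · obtain ⟨h0, hkk⟩ := key _ _ h (by omega) hxy
      rw [h0, hkk] at hxy; exact hxy.symm
    · exact absurd (Fin.ext h) hne
    · obtain ⟨h0, hkk⟩ := key _ _ h (by omega) hxy.symm
      rw [h0, hkk] at hxy; exact hxy
  refine ⟨hcard', hcycle, ?_⟩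
  intro i hi
  rcases Nat.lt_or_ge (i + 1) k with h | h
  · rw [Nat.mod_eq_of_lt h, ← fstep]
  · have hik : i + 1 = k := by omega
    rw [hik, Nat.mod_self, ← fstep, hik]
    exact hcycle
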